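/- Assume relation (7), i.e. m^2*(y^2 + 1) = y*a. Then for every integer p ≥ 1, H_p = y^p * h(p). -/

import Mathlib

open Finset

/-- Lemma 3.2 of the paper: assuming relation (7), for every integer `p ≥ 1` one has
`H_p = y^p * h(p)`, where `h` is the sequence of Lemma 3.2 and
`H_p = (y b / m²) ∑_{i=0}^{p-1} y^(2i) - ∑_{i=1}^{p-1} y^(2i)`. -/
theorem stmt_5 {K : Type*} [Field K] (m x y : K) (hm : m ≠ 0)
    (a b : K)
    (ha : a = m ^ 4 - x * m ^ 4 + x ^ 2 * m ^ 2 + m ^ 2 + 1 - x)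
    (hb : b = m ^ 4 - x * m ^ 2 + 1)
    (h : ℤ → K) (h0 : h 0 = 1) (h1 : h 1 = b / m ^ 2)
    (hrec : ∀ p : ℤ, h p = (a / m ^ 2) * h (p - 1) - h (p - 2))
    (h7 : m ^ 2 * (y ^ 2 + 1) = y * a) :
    ∀ p : ℕ, 1 ≤ p →
      (y * b / m ^ 2) * (∑ i ∈ Finset.range p, y ^ (2 * i)) -
        (∑ i ∈ Finset.Ico 1 p, y ^ (2 * i)) = y ^ p * h p := by
  have hm2 : m ^ 2 ≠ 0 := pow_ne_zero 2 hm
  have key : ∀ n : ℕ,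
      ((y * b / m ^ 2) * (∑ i ∈ Finset.range (n+1), y ^ (2 * i)) -
        (∑ i ∈ Finset.Ico 1 (n+1), y ^ (2 * i)) = y ^ (n+1) * h ((n:ℤ)+1)) ∧
      ((y * b / m ^ 2) * (∑ i ∈ Finset.range (n+2), y ^ (2 * i)) -
        (∑ i ∈ Finset.Ico 1 (n+2), y ^ (2 * i)) = y ^ (n+2) * h ((n:ℤ)+2)) := by
    intro n
    induction n with
    | zero =>
      constructor
      · simp [h1]
        ring
      · have h2 : h 2 = (a / m ^ 2) * (b / m ^ 2) - 1 := by
          have := hrec 2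
          norm_num at this
          rw [this, h1, h0]
        simp [Finset.sum_range_succ, Finset.sum_Ico_succ_top, h2]
        field_simp
        ring_nf
        linear_combination (y * b) * h7
      | succ k ih =>
      refine ⟨ih.2, ?_⟩
      have hr := hrec ((k : ℤ) + 3)
      have e1 : ((k : ℤ) + 3 - 1) = (k : ℤ) + 2 := by ring
      have e2 : ((k : ℤ) + 3 - 2) = (k : ℤ) + 1 := by ring
      rw [e1, e2] at hr
      have s3 : (∑ i ∈ Finset.range (k+3), y ^ (2 * i)) =
          (∑ i ∈ Finset.range (k+2), y ^ (2 * i)) + y ^ (2 * (k+2)) :=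
        Finset.sum_range_succ _ _
      have t3 : (∑ i ∈ Finset.Ico 1 (k+3), y ^ (2 * i)) =
          (∑ i ∈ Finset.Ico 1 (k+2), y ^ (2 * i)) + y ^ (2 * (k+2)) :=
        Finset.sum_Ico_succ_top (by omega) _
      have e3 : (((k+1 : ℕ) : ℤ) + 2) = (k : ℤ) + 3 := by push_cast; ring
      show y * b / m ^ 2 * (∑ i ∈ Finset.range (k+3), y ^ (2 * i)) -
        (∑ i ∈ Finset.Ico 1 (k+3), y ^ (2 * i)) = y ^ (k+3) * h (((k+1 : ℕ) : ℤ) + 2)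
      have s2 : (∑ i ∈ Finset.range (k+2), y ^ (2 * i)) =
          (∑ i ∈ Finset.range (k+1), y ^ (2 * i)) + y ^ (2 * (k+1)) :=
        Finset.sum_range_succ _ _
      have t2 : (∑ i ∈ Finset.Ico 1 (k+2), y ^ (2 * i)) =
          (∑ i ∈ Finset.Ico 1 (k+1), y ^ (2 * i)) + y ^ (2 * (k+1)) :=
        Finset.sum_Ico_succ_top (by omega) _
      rw [e3, s3, t3, s2, t2]
      rw [s2, t2] at ih
      have ih1 := ih.1
      have ih2 := ih.2
      linear_combination (norm := (field_simp; ring1)) (-(y ^ (k+3))) * hr + (y^2 + 1) * ih2 - y^2 * ih1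
        + (y ^ (k+2) * h ((k:ℤ)+2) / m ^ 2) * h7
  intro p hp
  obtain ⟨n, rfl⟩ : ∃ n, p = n + 1 := ⟨p - 1, by omega⟩
  push_cast
  exact (key n).1
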